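/- Let B be a noise-type Boolean algebra in Λ. Then for all x, y ∈ B the projections satisfy Q_x Q_y = Q_{x∧y}; in particular B is a commutative subset of Λ. -/

import Mathlib

open MeasureTheory Filter Topology

set_option synthInstance.maxHeartbeats 400000
noncomputable section

variable {Ω : Type*}

/-- The trivial σ-field augmented with all null sets: the least element `0` of `Λ`. -/
def nullSF {m0 : MeasurableSpace Ω} (μ : Measure Ω) : MeasurableSpace Ω :=
  MeasurableSpace.generateFrom {s : Set Ω | μ s = 0}

/-- Membership in `Λ`: a sub-σ-field of `m0` containing all null sets. -/
def InLam {m0 : MeasurableSpace Ω} (μ : Measure Ω) (m : MeasurableSpace Ω) : Prop :=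
  m ≤ m0 ∧ nullSF μ ≤ m

set_option synthInstance.maxHeartbeats 400000 in
/-- The type `L₂` subspace `L₂(m)` of `H = L₂(Ω, F, P)`. -/
abbrev L2S {m0 : MeasurableSpace Ω} (μ : Measure Ω) (m : MeasurableSpace Ω) :
    Submodule ℝ (Lp ℝ 2 μ) :=
  @lpMeas Ω ℝ ℝ _ _ _ m m0 2 μ

/-- The orthogonal projection of `H = L₂(Ω, F, P)` onto `L₂(m)`. -/
def Q {m0 : MeasurableSpace Ω} (μ : Measure Ω) (m : MeasurableSpace Ω) :
    Lp ℝ 2 μ →L[ℝ] Lp ℝ 2 μ :=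
  letI := Classical.dec (m ≤ m0)
  if hm : m ≤ m0 then
    haveI : Fact (m ≤ m0) := ⟨hm⟩
    (L2S μ m).subtypeL.comp (Submodule.orthogonalProjectionOnto (L2S μ m))
  else 0

/-- Strong operator convergence of the projections `Q (x n)` to `Q l`. -/
def SOTLim {m0 : MeasurableSpace Ω} (μ : Measure Ω) (x : ℕ → MeasurableSpace Ω)
    (l : MeasurableSpace Ω) : Prop :=
  ∀ f : Lp ℝ 2 μ, Tendsto (fun n => Q μ (x n) f) atTop (𝓝 (Q μ l f))

/-- Independence of two sub-σ-fields. -/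
def IndepSF {m0 : MeasurableSpace Ω} (μ : Measure Ω) (x y : MeasurableSpace Ω) : Prop :=
  ∀ s t : Set Ω, MeasurableSet[x] s → MeasurableSet[y] t → μ (s ∩ t) = μ s * μ t

/-- A noise-type Boolean algebra: a sublattice of `Λ` containing `0` and `1`, distributive and
complemented (hence Boolean), in which σ-fields with trivial intersection are independent. -/
def IsNTBA {m0 : MeasurableSpace Ω} (μ : Measure Ω) (B : Set (MeasurableSpace Ω)) : Prop :=
  (∀ m ∈ B, InLam μ m) ∧
  nullSF μ ∈ B ∧ m0 ∈ B ∧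
  (∀ x ∈ B, ∀ y ∈ B, x ⊓ y ∈ B ∧ x ⊔ y ∈ B) ∧
  (∀ x ∈ B, ∀ y ∈ B, ∀ z ∈ B, x ⊓ (y ⊔ z) = (x ⊓ y) ⊔ (x ⊓ z)) ∧
  (∀ x ∈ B, ∃ x' ∈ B, x ⊓ x' = nullSF μ ∧ x ⊔ x' = m0) ∧
  (∀ x ∈ B, ∀ y ∈ B, x ⊓ y = nullSF μ → IndepSF μ x y)

/-- The closure of `B ⊆ Λ` in the strong operator topology (which is metrizable, so sequential). -/
def Cl {m0 : MeasurableSpace Ω} (μ : Measure Ω) (B : Set (MeasurableSpace Ω)) :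
    Set (MeasurableSpace Ω) :=
  {x | InLam μ x ∧ ∃ b : ℕ → MeasurableSpace Ω, (∀ n, b n ∈ B) ∧ SOTLim μ b x}

section Aux

open ProbabilityTheory



lemma Q_eq {m m0 : MeasurableSpace Ω} {μ : Measure Ω} (hm : m ≤ m0) (f : Lp ℝ 2 μ) :
    Q μ m f = ((condExpL2 ℝ ℝ hm f : lpMeas ℝ ℝ m 2 μ) : Lp ℝ 2 μ) := by
  simp only [Q, dif_pos hm]
  rfl

lemma Q_meas {m m0 : MeasurableSpace Ω} {μ : Measure Ω} (hm : m ≤ m0) (f : Lp ℝ 2 μ) :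
    AEStronglyMeasurable[m] (Q μ m f : Ω → ℝ) μ := by
  rw [Q_eq hm]
  exact lpMeas.aestronglyMeasurable _

lemma Q_integrable {m0 : MeasurableSpace Ω} {μ : Measure Ω} [IsProbabilityMeasure μ] (f : Lp ℝ 2 μ) : Integrable (f : Ω → ℝ) μ :=
  (Lp.memLp f).integrable one_le_two

/-- The projection `Q` is (a.e. equal to) conditional expectation. -/
lemma Q_ae_condexp {m m0 : MeasurableSpace Ω} {μ : Measure Ω} [IsProbabilityMeasure μ] (hm : m ≤ m0) (f : Lp ℝ 2 μ) :
    (Q μ m f : Ω → ℝ) =ᵐ[μ] μ[(f : Ω → ℝ)|m] := by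
  rw [Q_eq hm]
  refine ae_eq_condExp_of_forall_setIntegral_eq hm (Q_integrable f) ?_ ?_
    (lpMeas.aestronglyMeasurable _)
  · exact fun s _ _ => (Q_integrable _).integrableOn
  · exact fun s hs hμs => integral_condExpL2_eq hm f hs hμs.ne

/-- The σ-field `z ⊔ w` is generated by the π-system of intersections. -/
lemma sup_eq_generateFrom_inter (z w : MeasurableSpace Ω) :
    z ⊔ w = MeasurableSpace.generateFrom
      {s | ∃ s₁ t, MeasurableSet[z] s₁ ∧ MeasurableSet[w] t ∧ s = s₁ ∩ t} := by
  refine le_antisymm (sup_le ?_ ?_) (MeasurableSpace.generateFrom_le ?_)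
  · intro s hs
    exact MeasurableSpace.measurableSet_generateFrom
      ⟨s, Set.univ, hs, MeasurableSet.univ, (Set.inter_univ s).symm⟩
  · intro t ht
    exact MeasurableSpace.measurableSet_generateFrom
      ⟨Set.univ, t, MeasurableSet.univ, ht, (Set.univ_inter t).symm⟩
  · rintro s ⟨s₁, t, hs₁, ht, rfl⟩
    exact MeasurableSet.inter (le_sup_left (α := MeasurableSpace Ω) _ hs₁)
      (le_sup_right (α := MeasurableSpace Ω) _ ht)

lemma isPiSystem_inter (z w : MeasurableSpace Ω) :
    IsPiSystem {s : Set Ω | ∃ s₁ t, MeasurableSet[z] s₁ ∧ MeasurableSet[w] t ∧ s = s₁ ∩ t} := by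
  rintro s ⟨s₁, t₁, hs₁, ht₁, rfl⟩ u ⟨s₂, t₂, hs₂, ht₂, rfl⟩ -
  exact ⟨s₁ ∩ s₂, t₁ ∩ t₂, hs₁.inter hs₂, ht₁.inter ht₂, Set.inter_inter_inter_comm _ _ _ _⟩

/-- Factorization of an integral over an independent set. -/
lemma setIntegral_indep {y w m0 : MeasurableSpace Ω} {μ : Measure Ω} [IsProbabilityMeasure μ]
    (hy : y ≤ m0) (hw : w ≤ m0) (hind : Indep y w μ) {g : Ω → ℝ}
    (hg : StronglyMeasurable[y] g) (hgi : Integrable g μ) {t : Set Ω}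
    (ht : MeasurableSet[w] t) :
    ∫ a in t, g a ∂μ = (μ t).toReal * ∫ a, g a ∂μ := by
  have h1 := setIntegral_condExp hw hgi ht
  have h2 := condExp_indep_eq hy hw hg hind
  calc ∫ a in t, g a ∂μ = ∫ a in t, (μ[g|w]) a ∂μ := h1.symm
    _ = ∫ _a in t, (∫ x, g x ∂μ) ∂μ := integral_congr_ae (ae_restrict_of_ae h2)
    _ = (μ t).toReal * ∫ a, g a ∂μ := by rw [setIntegral_const, smul_eq_mul, measureReal_def]

/-- Key lemma: if `z ≤ y`, `w` is independent of `y` and `f` is a.e. `y`-measurable, then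
`μ[f | z ⊔ w] = μ[f | z]`. -/
lemma condexp_sup_of_indep {z y w m0 : MeasurableSpace Ω} {μ : Measure Ω} [IsProbabilityMeasure μ]
    (hz : z ≤ y) (hy : y ≤ m0) (hw : w ≤ m0) (hind : Indep y w μ) {f : Ω → ℝ}
    (hfi : Integrable f μ) (hfm : AEStronglyMeasurable[y] f μ) :
    μ[f | z ⊔ w] =ᵐ[μ] μ[f | z] := by
  have hzw : z ⊔ w ≤ m0 := sup_le (hz.trans hy) hw
  have hz0 : z ≤ m0 := hz.trans hy
  refine (ae_eq_condExp_of_forall_setIntegral_eq hzw hfi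
    (fun s _ _ => integrable_condExp.integrableOn) ?_ ?_).symm
  swap
  · exact StronglyMeasurable.aestronglyMeasurable (μ := μ) ((stronglyMeasurable_condExp (m := z) (f := f) (μ := μ)).mono (le_sup_left : z ≤ z ⊔ w))
  intro s hs _
  -- Dynkin's π-λ argument over the π-system of intersections
  set F := hfm.mk f with hF_def
  have hFy : StronglyMeasurable[y] F := hfm.stronglyMeasurable_mk
  have hfF : f =ᵐ[μ] F := hfm.ae_eq_mk
  have hFi : Integrable F μ := hfi.congr hfF
  have key : ∀ ⦃s : Set Ω⦄, MeasurableSet[z ⊔ w] s →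
      ∫ a in s, (μ[f|z]) a ∂μ = ∫ a in s, f a ∂μ := by
    refine MeasurableSpace.induction_on_inter (m := z ⊔ w)
      (sup_eq_generateFrom_inter z w) (isPiSystem_inter z w) (by simp) ?_ ?_ ?_
    · -- π-system case
      rintro u ⟨s₁, t, hs₁, ht, rfl⟩
      have hs₁y : MeasurableSet[y] s₁ := hz _ hs₁
      have hs₁0 : MeasurableSet[m0] s₁ := hz0 _ hs₁
      have hGy : StronglyMeasurable[y] (s₁.indicator (μ[f|z])) :=
        ((stronglyMeasurable_condExp (m := z)).mono hz).indicator hs₁y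
      have hFy' : StronglyMeasurable[y] (s₁.indicator F) := hFy.indicator hs₁y
      have hGi : Integrable (s₁.indicator (μ[f|z])) μ :=
        (integrable_condExp (μ := μ) (m := z)).indicator hs₁0
      have hFi' : Integrable (s₁.indicator F) μ := hFi.indicator hs₁0
      have eqF : ∫ a in s₁ ∩ t, f a ∂μ = (μ t).toReal * ∫ a in s₁, f a ∂μ := by
        calc ∫ a in s₁ ∩ t, f a ∂μ = ∫ a in s₁ ∩ t, F a ∂μ :=
              integral_congr_ae (ae_restrict_of_ae hfF)
          _ = ∫ a in t ∩ s₁, F a ∂μ := by rw [Set.inter_comm]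
          _ = ∫ a in t, s₁.indicator F a ∂μ := (setIntegral_indicator hs₁0).symm
          _ = (μ t).toReal * ∫ a, s₁.indicator F a ∂μ :=
              setIntegral_indep hy hw hind hFy' hFi' ht
          _ = (μ t).toReal * ∫ a in s₁, F a ∂μ := by rw [integral_indicator hs₁0]
          _ = (μ t).toReal * ∫ a in s₁, f a ∂μ := by
              rw [integral_congr_ae (ae_restrict_of_ae hfF)]
      have eqG : ∫ a in s₁ ∩ t, (μ[f|z]) a ∂μ = (μ t).toReal * ∫ a in s₁, (μ[f|z]) a ∂μ := by
        calc ∫ a in s₁ ∩ t, (μ[f|z]) a ∂μ = ∫ a in t ∩ s₁, (μ[f|z]) a ∂μ := by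
              rw [Set.inter_comm]
          _ = ∫ a in t, s₁.indicator (μ[f|z]) a ∂μ := (setIntegral_indicator hs₁0).symm
          _ = (μ t).toReal * ∫ a, s₁.indicator (μ[f|z]) a ∂μ :=
              setIntegral_indep hy hw hind hGy hGi ht
          _ = (μ t).toReal * ∫ a in s₁, (μ[f|z]) a ∂μ := by rw [integral_indicator hs₁0]
      rw [eqF, eqG, setIntegral_condExp hz0 hfi hs₁]
    · -- complement
      intro u hu h
      have hu0 : MeasurableSet[m0] u := hzw _ hu
      have e1 := integral_add_compl hu0 (integrable_condExp (μ := μ) (f := f) (m := z))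
      have e2 := integral_add_compl hu0 hfi
      have e3 : ∫ a, (μ[f|z]) a ∂μ = ∫ a, f a ∂μ := integral_condExp hz0
      linarith
    · -- countable disjoint union
      intro g hdisj hmeas hind'
      have hg0 : ∀ i, MeasurableSet[m0] (g i) := fun i => hzw _ (hmeas i)
      rw [integral_iUnion hg0 hdisj integrable_condExp.integrableOn,
        integral_iUnion hg0 hdisj hfi.integrableOn]
      exact tsum_congr hind'
  exact key hs

end Aux

/-- For a noise-type Boolean algebra `B`, the projections satisfy `Q_x Q_y = Q_{x ∧ y}` for
all `x, y ∈ B`; in particular `B` is commutative. -/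
theorem stmt14 {m0 : MeasurableSpace Ω} (μ : Measure Ω) [IsProbabilityMeasure μ]
    (B : Set (MeasurableSpace Ω)) (hB : IsNTBA μ B) :
    ∀ x ∈ B, ∀ y ∈ B,
      (Q μ x).comp (Q μ y) = Q μ (x ⊓ y) ∧
      (Q μ x).comp (Q μ y) = (Q μ y).comp (Q μ x) := by
  classical
  obtain ⟨hlam, h0, h1, hlat, hdist, hcompl, hindep⟩ := hB
  -- main step
  have main : ∀ x ∈ B, ∀ y ∈ B, (Q μ x).comp (Q μ y) = Q μ (x ⊓ y) := by
    intro x hx y hy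
    have hx0 : x ≤ m0 := (hlam x hx).1
    have hy0 : y ≤ m0 := (hlam y hy).1
    obtain ⟨y', hy'B, hyy'_inf, hyy'_sup⟩ := hcompl y hy
    set z := x ⊓ y with hz_def
    set w := x ⊓ y' with hw_def
    have hwB : w ∈ B := (hlat x hx y' hy'B).1
    have hw0 : w ≤ m0 := (hlam w hwB).1
    -- x = z ⊔ w
    have hxzw : x = z ⊔ w := by
      have := hdist x hx y hy y' hy'B
      rw [hyy'_sup] at this
      rw [hz_def, hw_def, ← this, inf_eq_left.mpr hx0]
    -- w and y are independent
    have hwy_null : w ⊓ y = nullSF μ := by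
      refine le_antisymm ?_ ?_
      · calc w ⊓ y ≤ y' ⊓ y := inf_le_inf_right y inf_le_right
          _ = y ⊓ y' := inf_comm _ _
          _ = nullSF μ := hyy'_inf
      · exact le_inf (hlam w hwB).2 (hlam y hy).2
    have hIndepSF : IndepSF μ w y := hindep w hwB y hy hwy_null
    have hInd : ProbabilityTheory.Indep y w μ := by
      rw [ProbabilityTheory.Indep_iff]
      intro t1 t2 h1 h2
      rw [Set.inter_comm, mul_comm]
      exact hIndepSF t2 t1 h2 h1
    have hz0 : z ≤ m0 := le_trans inf_le_right hy0
    -- pointwise equality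
    ext f
    simp only [ContinuousLinearMap.comp_apply]
    have g_meas : AEStronglyMeasurable[y] ((Q μ y f : Lp ℝ 2 μ) : Ω → ℝ) μ := Q_meas hy0 f
    have g_int : Integrable ((Q μ y f : Lp ℝ 2 μ) : Ω → ℝ) μ := Q_integrable _
    calc (Q μ x (Q μ y f) : Ω → ℝ)
        =ᵐ[μ] μ[((Q μ y f : Lp ℝ 2 μ) : Ω → ℝ)|x] := Q_ae_condexp hx0 _
      _ =ᵐ[μ] μ[((Q μ y f : Lp ℝ 2 μ) : Ω → ℝ)|z] := by
          rw [hxzw]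
          exact condexp_sup_of_indep inf_le_right hy0 hw0 hInd g_int g_meas
      _ =ᵐ[μ] μ[μ[(f : Ω → ℝ)|y]|z] := condExp_congr_ae (Q_ae_condexp hy0 f)
      _ =ᵐ[μ] μ[(f : Ω → ℝ)|z] := condExp_condExp_of_le inf_le_right hy0
      _ =ᵐ[μ] (Q μ z f : Ω → ℝ) := (Q_ae_condexp hz0 f).symm
  intro x hx y hy
  refine ⟨main x hx y hy, ?_⟩
  rw [main x hx y hy, main y hy x hx, inf_comm]
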